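/- For two solutions φ, φ₀ of φ' + sin φ = f, the functional C[φ,φ₀] defined by C[φ,φ₀]⁻¹ = -Q₀ + i e^{-P₀}(ζ₀+ζ)/(ζ₀-ζ) is a constant in t and is antisymmetric: C[φ,φ₀] = -C[φ₀,φ]. -/

import Mathlib

section ChelkakAux
open Complex
private lemma deriv_zero_aux (c s c0 s0 F E : ℂ) (hpy : c^2 + s^2 = 1) (hpy0 : c0^2 + s0^2 = 1)
    (hd : (c0 + s0*I) - (c + s*I) ≠ 0) :
    -(E*s0) + (I * (E * -c0) * (((c0+s0*I) + (c+s*I)) / ((c0+s0*I) - (c+s*I))) +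
      I * E * ((((c0+s0*I)*(I*(F-s0)) + (c+s*I)*(I*(F-s))) * ((c0+s0*I) - (c+s*I)) -
        ((c0+s0*I) + (c+s*I)) * ((c0+s0*I)*(I*(F-s0)) - (c+s*I)*(I*(F-s)))) /
        ((c0+s0*I) - (c+s*I))^2)) = 0 := by
  set D := (c0 + s0*I) - (c + s*I) with hD
  have hD2 : D^2 ≠ 0 := pow_ne_zero _ hd
  have h1 : (((c0+s0*I) + (c+s*I)) / D) * D^2 = ((c0+s0*I) + (c+s*I)) * D := by
    rw [pow_two, ← mul_assoc, div_mul_cancel₀ _ hd]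
  have h2 : ((((c0+s0*I)*(I*(F-s0)) + (c+s*I)*(I*(F-s))) * D -
        ((c0+s0*I) + (c+s*I)) * ((c0+s0*I)*(I*(F-s0)) - (c+s*I)*(I*(F-s)))) / D^2) * D^2 =
      (((c0+s0*I)*(I*(F-s0)) + (c+s*I)*(I*(F-s))) * D -
        ((c0+s0*I) + (c+s*I)) * ((c0+s0*I)*(I*(F-s0)) - (c+s*I)*(I*(F-s)))) :=
    div_mul_cancel₀ _ hD2
  have hmul : (-(E*s0) + (I * (E * -c0) * (((c0+s0*I) + (c+s*I)) / D) +
      I * E * ((((c0+s0*I)*(I*(F-s0)) + (c+s*I)*(I*(F-s))) * D -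
        ((c0+s0*I) + (c+s*I)) * ((c0+s0*I)*(I*(F-s0)) - (c+s*I)*(I*(F-s)))) / D^2))) * D^2 = 0 := by
    linear_combination (I * (E * -c0)) * h1 + (I*E) * h2 +
      (-s0*E + c0*E*I) * hpy + (s0*E - c0*E*I) * hpy0 +
      (-s0^3*E - c0*s0^2*E*I - 2*c0^2*s0*E + 2*s*s0^2*E*I^2 + 2*s*c0*s0*E*I + s^2*s0*E
        - 2*s^2*s0*E*I^2 - s^2*c0*E*I + 2*c*s0^2*E*I + 2*c*c0*s0*E - 2*c*s*s0*E*I) * Complex.I_sq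
  exact (mul_eq_zero.mp hmul).resolve_right hD2

private lemma const_lemma (f φ φ' φ₀ φ₀' P₀ Q₀ : ℝ → ℝ)
    (hφ : ∀ t, HasDerivAt φ (φ' t) t) (hφ₀ : ∀ t, HasDerivAt φ₀ (φ₀' t) t)
    (hode : ∀ t, φ' t + Real.sin (φ t) = f t)
    (hode₀ : ∀ t, φ₀' t + Real.sin (φ₀ t) = f t)
    (hP₀ : ∀ t, HasDerivAt P₀ (Real.cos (φ₀ t)) t)
    (hQ₀ : ∀ t, HasDerivAt Q₀ (Real.exp (-P₀ t) * Real.sin (φ₀ t)) t)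
    (hne : ∀ t, Complex.exp (Complex.I * φ t) ≠ Complex.exp (Complex.I * φ₀ t)) :
    ∀ t s : ℝ,
      (-(Q₀ t : ℂ) + Complex.I * Complex.exp (-(P₀ t : ℂ)) *
          ((Complex.exp (Complex.I * φ₀ t) + Complex.exp (Complex.I * φ t)) /
           (Complex.exp (Complex.I * φ₀ t) - Complex.exp (Complex.I * φ t)))) =
      (-(Q₀ s : ℂ) + Complex.I * Complex.exp (-(P₀ s : ℂ)) *
          ((Complex.exp (Complex.I * φ₀ s) + Complex.exp (Complex.I * φ s)) /
           (Complex.exp (Complex.I * φ₀ s) - Complex.exp (Complex.I * φ s)))) := by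
  set g : ℝ → ℂ := fun u => (-(Q₀ u : ℂ) + Complex.I * Complex.exp (-(P₀ u : ℂ)) *
          ((Complex.exp (Complex.I * φ₀ u) + Complex.exp (Complex.I * φ u)) /
           (Complex.exp (Complex.I * φ₀ u) - Complex.exp (Complex.I * φ u)))) with hg
  have hder : ∀ t, HasDerivAt g 0 t := by
    intro t
    have hden : Complex.exp (Complex.I * φ₀ t) - Complex.exp (Complex.I * φ t) ≠ 0 :=
      sub_ne_zero.mpr (hne t).symm
    have hz : HasDerivAt (fun u => Complex.exp (Complex.I * φ u))
        (Complex.exp (Complex.I * φ t) * (Complex.I * φ' t)) t :=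
      (((hφ t).ofReal_comp).const_mul Complex.I).cexp
    have hz₀ : HasDerivAt (fun u => Complex.exp (Complex.I * φ₀ u))
        (Complex.exp (Complex.I * φ₀ t) * (Complex.I * φ₀' t)) t :=
      (((hφ₀ t).ofReal_comp).const_mul Complex.I).cexp
    have hE : HasDerivAt (fun u => Complex.exp (-(P₀ u : ℂ)))
        (Complex.exp (-(P₀ t : ℂ)) * (-(Real.cos (φ₀ t) : ℂ))) t :=
      (((hP₀ t).ofReal_comp).neg).cexp
    have hq : HasDerivAt (fun u => -(Q₀ u : ℂ))
        (-((Real.exp (-P₀ t) * Real.sin (φ₀ t) : ℝ) : ℂ)) t :=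
      ((hQ₀ t).ofReal_comp).neg
    have hquot := (hz₀.add hz).div (hz₀.sub hz) hden
    have hmain := hq.add ((hE.const_mul Complex.I).mul hquot)
    rw [hg]
    convert hmain using 1
    case e'_4 => rfl
    case e'_8 => rfl
    -- goal : 0 = big derivative
    have hpy : (Real.cos (φ t) : ℂ)^2 + (Real.sin (φ t) : ℂ)^2 = 1 := by
      norm_cast; exact Real.cos_sq_add_sin_sq (φ t)
    have hpy0 : (Real.cos (φ₀ t) : ℂ)^2 + (Real.sin (φ₀ t) : ℂ)^2 = 1 := by
      norm_cast; exact Real.cos_sq_add_sin_sq (φ₀ t)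
    have ha : cexp (Complex.I * (φ₀ t : ℂ)) = (Real.cos (φ₀ t) : ℂ) + (Real.sin (φ₀ t) : ℂ) * Complex.I := by
      rw [mul_comm, Complex.exp_mul_I, Complex.ofReal_cos, Complex.ofReal_sin]
    have hb : cexp (Complex.I * (φ t : ℂ)) = (Real.cos (φ t) : ℂ) + (Real.sin (φ t) : ℂ) * Complex.I := by
      rw [mul_comm, Complex.exp_mul_I, Complex.ofReal_cos, Complex.ofReal_sin]
    have hf' : (φ' t : ℂ) = (f t : ℂ) - (Real.sin (φ t) : ℂ) := by
      norm_cast; linarith [hode t]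
    have hf₀' : (φ₀' t : ℂ) = (f t : ℂ) - (Real.sin (φ₀ t) : ℂ) := by
      norm_cast; linarith [hode₀ t]
    have hEexp : ((Real.exp (-P₀ t) : ℝ) : ℂ) = cexp (-(P₀ t : ℂ)) := by
      rw [Complex.ofReal_exp, Complex.ofReal_neg]
    have hE0 : cexp (-(P₀ t : ℂ)) ≠ 0 := Complex.exp_ne_zero _
    simp only [Pi.add_apply, Pi.sub_apply, Pi.div_apply]
    rw [ha, hb] at hden ⊢
    rw [Complex.ofReal_mul, hEexp, hf', hf₀']
    linear_combination -(deriv_zero_aux (Real.cos (φ t) : ℂ) (Real.sin (φ t) : ℂ)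
      (Real.cos (φ₀ t) : ℂ) (Real.sin (φ₀ t) : ℂ) (f t : ℂ) (cexp (-(P₀ t : ℂ)))
      hpy hpy0 hden)
  intro t s
  exact is_const_of_deriv_eq_zero (fun u => (hder u).differentiableAt)
    (fun u => (hder u).deriv) t s


end ChelkakAux

/-- For two solutions `φ, φ₀` of `φ' + sin φ = f` with `e^{iφ} ≠ e^{iφ₀}`,
the functional `C[φ,φ₀]` defined by
`C[φ,φ₀]⁻¹ = -Q₀ + i e^{-P₀}(ζ₀+ζ)/(ζ₀-ζ)` is constant in `t` and
antisymmetric: `C[φ,φ₀] = -C[φ₀,φ]`. -/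
theorem stmt7 (f φ φ' φ₀ φ₀' P Q P₀ Q₀ : ℝ → ℝ)
    (hφ : ∀ t, HasDerivAt φ (φ' t) t) (hφ₀ : ∀ t, HasDerivAt φ₀ (φ₀' t) t)
    (hode : ∀ t, φ' t + Real.sin (φ t) = f t)
    (hode₀ : ∀ t, φ₀' t + Real.sin (φ₀ t) = f t)
    (hP₀ : ∀ t, HasDerivAt P₀ (Real.cos (φ₀ t)) t) (hP₀0 : P₀ 0 = 0)
    (hQ₀ : ∀ t, HasDerivAt Q₀ (Real.exp (-P₀ t) * Real.sin (φ₀ t)) t) (hQ₀0 : Q₀ 0 = 0)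
    (hP : ∀ t, HasDerivAt P (Real.cos (φ t)) t) (hP0 : P 0 = 0)
    (hQ : ∀ t, HasDerivAt Q (Real.exp (-P t) * Real.sin (φ t)) t) (hQ0 : Q 0 = 0)
    (hne : ∀ t, Complex.exp (Complex.I * φ t) ≠ Complex.exp (Complex.I * φ₀ t)) :
    (∀ t s : ℝ,
      (-(Q₀ t : ℂ) + Complex.I * Complex.exp (-(P₀ t : ℂ)) *
          ((Complex.exp (Complex.I * φ₀ t) + Complex.exp (Complex.I * φ t)) /
           (Complex.exp (Complex.I * φ₀ t) - Complex.exp (Complex.I * φ t))))⁻¹ =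
      (-(Q₀ s : ℂ) + Complex.I * Complex.exp (-(P₀ s : ℂ)) *
          ((Complex.exp (Complex.I * φ₀ s) + Complex.exp (Complex.I * φ s)) /
           (Complex.exp (Complex.I * φ₀ s) - Complex.exp (Complex.I * φ s))))⁻¹) ∧
    (∀ t : ℝ,
      (-(Q₀ t : ℂ) + Complex.I * Complex.exp (-(P₀ t : ℂ)) *
          ((Complex.exp (Complex.I * φ₀ t) + Complex.exp (Complex.I * φ t)) /
           (Complex.exp (Complex.I * φ₀ t) - Complex.exp (Complex.I * φ t))))⁻¹ =
      -((-(Q t : ℂ) + Complex.I * Complex.exp (-(P t : ℂ)) *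
          ((Complex.exp (Complex.I * φ t) + Complex.exp (Complex.I * φ₀ t)) /
           (Complex.exp (Complex.I * φ t) - Complex.exp (Complex.I * φ₀ t))))⁻¹)) := by
  constructor
  · intro t s
    rw [const_lemma f φ φ' φ₀ φ₀' P₀ Q₀ hφ hφ₀ hode hode₀ hP₀ hQ₀ hne t s]
  · intro t
    rw [const_lemma f φ φ' φ₀ φ₀' P₀ Q₀ hφ hφ₀ hode hode₀ hP₀ hQ₀ hne t 0,
        const_lemma f φ₀ φ₀' φ φ' P Q hφ₀ hφ hode₀ hode hP hQ (fun u => (hne u).symm) t 0,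
        hQ₀0, hP₀0, hQ0, hP0]
    simp only [Complex.ofReal_zero, neg_zero, Complex.exp_zero, mul_one]
    rw [← inv_neg]
    congr 1
    rw [show Complex.exp (Complex.I*(φ 0:ℂ)) - Complex.exp (Complex.I*(φ₀ 0:ℂ)) =
        -(Complex.exp (Complex.I*(φ₀ 0:ℂ)) - Complex.exp (Complex.I*(φ 0:ℂ))) by ring, div_neg]
    ring
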